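/- For positive integers m and even positive integer n, the alternating power sum T_m(n) = ∑_{l=0}^{n-1} (-1)^l l^m satisfies T_m(n) + (1/2) ∑_{l=0}^{m-1} C(m,l) E_l n^{m-l} = 0, where E_l are Euler numbers. -/

import Mathlib

/-- The Euler polynomials, defined by the recurrence
`E_n(x) = x^n - (1/2) * ∑_{k<n} C(n,k) E_k(x)`,
equivalent to the generating function `2 e^{xt}/(e^t+1) = ∑ E_n(x) t^n/n!`. -/
noncomputable def eulerPoly : ℕ → Polynomial ℚ := fun n =>
  n.strongRecOn fun n ih =>
    Polynomial.X ^ n - Polynomial.C (1/2 : ℚ) *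
      ∑ k : Fin n, Polynomial.C ((n.choose k : ℚ)) * ih k k.2

/-- The Euler numbers `E_n = E_n(0)`, i.e. with EGF `2/(e^t+1)`. -/
noncomputable def eulerNumber (n : ℕ) : ℚ := (eulerPoly n).eval 0

open Polynomial Finset

lemma eulerPoly_def (n : ℕ) : eulerPoly n =
    X ^ n - C (1/2 : ℚ) * ∑ k ∈ range n, C ((n.choose k : ℚ)) * eulerPoly k := by
  rw [eulerPoly, Nat.strongRecOn_eq]
  simp only []
  rw [← Fin.sum_univ_eq_sum_range (fun k => C ((n.choose k : ℚ)) * eulerPoly k)]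
  rfl

lemma eulerPoly_zero : eulerPoly 0 = 1 := by
  rw [eulerPoly_def]; simp

lemma eulerPoly_degree_le (n : ℕ) : (eulerPoly n).degree ≤ n := by
  induction n using Nat.strong_induction_on with
  | _ n ih =>
    rw [eulerPoly_def]
    refine le_trans (degree_sub_le _ _) (max_le (degree_X_pow_le n) ?_)
    refine le_trans (degree_mul_le _ _) ?_
    refine le_trans (add_le_add degree_C_le (degree_sum_le _ _)) ?_
    rw [zero_add]
    refine Finset.sup_le fun k hk => ?_
    refine le_trans (degree_mul_le _ _) ?_
    refine le_trans (add_le_add degree_C_le (ih k (mem_range.1 hk))) ?_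
    rw [zero_add]
    exact_mod_cast Nat.cast_le.2 (le_of_lt (mem_range.1 hk))

lemma eulerPoly_sum_degree_lt (n : ℕ) :
    (C (1/2 : ℚ) * ∑ k ∈ range n, C ((n.choose k : ℚ)) * eulerPoly k).degree < n := by
  refine lt_of_le_of_lt (degree_mul_le _ _) ?_
  refine lt_of_le_of_lt (add_le_add degree_C_le (degree_sum_le _ _)) ?_
  rw [zero_add]
  refine (Finset.sup_lt_iff (by exact_mod_cast WithBot.bot_lt_coe n)).2 fun k hk => ?_
  refine lt_of_le_of_lt (degree_mul_le _ _) ?_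
  refine lt_of_le_of_lt (add_le_add_left degree_C_le _) ?_
  rw [zero_add]
  exact lt_of_le_of_lt (eulerPoly_degree_le k) (by exact_mod_cast mem_range.1 hk)

lemma eulerPoly_natDegree (n : ℕ) : (eulerPoly n).natDegree = n := by
  have h : (eulerPoly n).degree = n := by
    rw [eulerPoly_def, degree_sub_eq_left_of_degree_lt, degree_X_pow]
    rw [degree_X_pow]; exact eulerPoly_sum_degree_lt n
  exact natDegree_eq_of_degree_eq_some h

lemma eulerPoly_derivative (n : ℕ) :
    derivative (eulerPoly (n + 1)) = C ((n + 1 : ℕ) : ℚ) * eulerPoly n := by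
  induction n using Nat.strong_induction_on with
  | _ n ih =>
    rw [eulerPoly_def (n + 1)]
    rw [derivative_sub, derivative_X_pow, derivative_C_mul, derivative_sum]
    rw [Finset.sum_range_succ' (fun k => derivative (C ((Nat.choose (n+1) k : ℚ)) * eulerPoly k))]
    simp only [derivative_C_mul]
    rw [eulerPoly_zero]
    simp only [derivative_one, mul_zero, add_zero]
    have hterm : ∀ i ∈ range n, C (((n+1).choose (i+1) : ℚ)) * derivative (eulerPoly (i+1))
        = C (((n+1) : ℕ) : ℚ) * (C ((n.choose i : ℚ)) * eulerPoly i) := by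
      intro i hi
      rw [ih i (mem_range.1 hi)]
      rw [← mul_assoc, ← mul_assoc, ← C_mul, ← C_mul]
      congr 2
      exact_mod_cast (Nat.add_one_mul_choose_eq n i).symm
    rw [Finset.sum_congr rfl hterm, ← Finset.mul_sum]
    rw [eulerPoly_def n]
    push_cast
    ring

lemma eulerPoly_iterate_derivative (k n : ℕ) :
    derivative^[k] (eulerPoly n) = C ((n.descFactorial k : ℚ)) * eulerPoly (n - k) := by
  induction k generalizing n with
  | zero => simp
  | succ k ih =>
    rw [Function.iterate_succ_apply]
    cases n with
    | zero =>
      rw [eulerPoly_zero, derivative_one]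
      simp [iterate_derivative_zero]
    | succ m =>
      rw [eulerPoly_derivative, iterate_derivative_C_mul, ih m]
      rw [← mul_assoc, ← C_mul, Nat.succ_sub_succ]
      congr 2
      rw [Nat.succ_descFactorial_succ]
      push_cast; ring

lemma eulerPoly_hasseDeriv (k n : ℕ) :
    hasseDeriv k (eulerPoly n) = C ((n.choose k : ℚ)) * eulerPoly (n - k) := by
  have h := congrFun (factorial_smul_hasseDeriv (R := ℚ) k) (eulerPoly n)
  simp only [LinearMap.smul_apply] at h
  rw [eulerPoly_iterate_derivative] at h
  have h2 : ((k.factorial : ℚ)) • hasseDeriv k (eulerPoly n)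
      = C ((n.descFactorial k : ℚ)) * eulerPoly (n - k) := by
    rw [← h]; simp [Nat.cast_smul_eq_nsmul ℚ]
  have hf : (k.factorial : ℚ) ≠ 0 := by exact_mod_cast Nat.factorial_ne_zero k
  rw [Nat.descFactorial_eq_factorial_mul_choose] at h2
  push_cast at h2
  rw [smul_eq_C_mul] at h2
  apply mul_left_cancel₀ (a := C ((k.factorial : ℚ))) (by simpa using hf)
  rw [h2, ← mul_assoc, ← C_mul]

lemma eulerPoly_eval_add (n : ℕ) (x y : ℚ) :
    (eulerPoly n).eval (x + y) = ∑ k ∈ range (n+1),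
      (n.choose k : ℚ) * (eulerPoly k).eval x * y ^ (n - k) := by
  have h1 : (eulerPoly n).eval (x + y) = (taylor x (eulerPoly n)).eval y := by
    rw [taylor_eval, add_comm]
  rw [h1, eval_eq_sum_range, natDegree_taylor, eulerPoly_natDegree]
  rw [← Finset.sum_range_reflect]
  refine Finset.sum_congr rfl fun i hi => ?_
  have hi' : i ≤ n := Nat.lt_succ_iff.1 (mem_range.1 hi)
  rw [taylor_coeff, eulerPoly_hasseDeriv]
  have e : n + 1 - 1 - i = n - i := by omega
  rw [e, Nat.sub_sub_self hi', Nat.choose_symm hi']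
  simp [mul_comm, mul_assoc, mul_left_comm]

lemma eulerPoly_eval_def (n : ℕ) (x : ℚ) : (eulerPoly n).eval x =
    x ^ n - (1/2 : ℚ) * ∑ k ∈ range n, (n.choose k : ℚ) * (eulerPoly k).eval x := by
  conv_lhs => rw [eulerPoly_def]
  simp [eval_finset_sum]

lemma eulerPoly_reflect (m : ℕ) (x : ℚ) :
    (eulerPoly m).eval (x + 1) + (eulerPoly m).eval x = 2 * x ^ m := by
  have h1 := eulerPoly_eval_add m x 1
  simp only [one_pow, mul_one] at h1
  rw [Finset.sum_range_succ, Nat.choose_self] at h1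
  have h2 := eulerPoly_eval_def m x
  rw [h1, h2]; push_cast; ring

theorem stmt_2 (m n : ℕ) (hm : 0 < m) (hn : 0 < n) (hne : Even n) :
    (∑ l ∈ Finset.range n, (-1 : ℚ) ^ l * (l : ℚ) ^ m) +
      (1/2) * ∑ l ∈ Finset.range m, (m.choose l : ℚ) * eulerNumber l * (n : ℚ) ^ (m - l) = 0 := by
  set f : ℕ → ℚ := fun l => (eulerPoly m).eval (l : ℚ) with hf
  set h : ℕ → ℚ := fun l => (-1 : ℚ) ^ l * f l with hh
  have hterm : ∀ l : ℕ, (-1 : ℚ) ^ l * (l : ℚ) ^ m = (h l - h (l + 1)) / 2 := by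
    intro l
    have := eulerPoly_reflect m (l : ℚ)
    simp only [hh, hf, pow_succ]
    push_cast
    linear_combination (-(-1:ℚ)^l / 2) * this
  have hsum : (∑ l ∈ Finset.range n, (-1 : ℚ) ^ l * (l : ℚ) ^ m)
      = (h 0 - h n) / 2 := by
    rw [Finset.sum_congr rfl fun l _ => hterm l, ← Finset.sum_div,
      Finset.sum_range_sub' h n]
  have h0 : h 0 = eulerNumber m := by simp [hh, hf, eulerNumber]
  have hn' : h n = f n := by simp [hh, hne.neg_one_pow]
  have hexp : f n = (∑ l ∈ Finset.range m, (m.choose l : ℚ) * eulerNumber l * (n : ℚ) ^ (m - l))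
      + eulerNumber m := by
    have := eulerPoly_eval_add m 0 (n : ℚ)
    rw [zero_add] at this
    show (eulerPoly m).eval (n : ℚ) = _
    rw [this, Finset.sum_range_succ, Nat.choose_self]
    simp [eulerNumber]
  rw [hsum, h0, hn', hexp]
  ring
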